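/- For every n ≥ 1 the coefficients of the derivative rule satisfy α_n·k_{n+1} = a·n·k_n and β_n·(2a(n−1)+d)·(2an+d) = n·(a(n−1)+d)·(b·d − 2a·e). (Theorem 1, formulas (14) and (18)) -/

import Mathlib

open Polynomial

set_option maxHeartbeats 1000000 in
theorem derivative_rule_alpha_beta
    (a b c d e : ℝ)
    (had : ∀ m : ℤ, -3 ≤ m → a * m + d ≠ 0)
    (p : ℕ → Polynomial ℝ) (k : ℕ → ℝ)
    (hdeg : ∀ n : ℕ, (p n).degree = n)
    (hlead : ∀ n : ℕ, (p n).coeff n = k n)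
    (hk0 : ∀ n : ℕ, k n ≠ 0)
    (hde : ∀ n : ℕ,
      (Polynomial.C a * X ^ 2 + Polynomial.C b * X + Polynomial.C c) *
          derivative (derivative (p n)) +
        (Polynomial.C d * X + Polynomial.C e) * derivative (p n) +
        Polynomial.C (-(a * n * ((n : ℝ) - 1) + d * n)) * p n = 0)
    (α β γ : ℕ → ℝ)
    (hrule : ∀ n : ℕ, 1 ≤ n →
      (Polynomial.C a * X ^ 2 + Polynomial.C b * X + Polynomial.C c) * derivative (p n) =
        Polynomial.C (α n) * p (n + 1) + Polynomial.C (β n) * p n +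
          Polynomial.C (γ n) * p (n - 1)) :
    ∀ n : ℕ, 1 ≤ n →
      α n * k (n + 1) = a * n * k n ∧
      β n * (2 * a * ((n : ℝ) - 1) + d) * (2 * a * n + d) =
        (n : ℝ) * (a * ((n : ℝ) - 1) + d) * (b * d - 2 * a * e) := by
  have hz : ∀ N j : ℕ, N < j → (p N).coeff j = 0 := by
    intro N j hj
    apply coeff_eq_zero_of_degree_lt
    rw [hdeg]; exact_mod_cast Nat.cast_lt.mpr hj
  -- subleading coefficient relation from the ODE
  have hsrel : ∀ m : ℕ,
      (p (m+1)).coeff m * (2*a*m+d) = ((m:ℝ)+1)*(b*(m:ℝ)+e)*(k (m+1)) := by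
    intro m
    have hde' := hde (m+1)
    set L := -(a * ((m+1 : ℕ):ℝ) * (((m+1 : ℕ):ℝ) - 1) + d * ((m+1 : ℕ):ℝ)) with hL
    have h := congrArg (fun f => f.coeff m) hde'
    rcases m with _ | _ | m
    ·
      simp [add_mul, mul_assoc, X_pow_mul, X_mul, coeff_mul_X_pow', coeff_mul_X,
        coeff_derivative, hlead, hz 1 2 (by omega), hz 1 3 (by omega)] at h
      rw [hL] at h
      push_cast at h ⊢
      linear_combination -h
    ·
      simp [add_mul, mul_assoc, X_pow_mul, X_mul, coeff_mul_X_pow', coeff_mul_X,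
        coeff_derivative, hlead, hz 2 3 (by omega), hz 2 4 (by omega)] at h
      rw [hL] at h
      push_cast at h ⊢
      linear_combination -h
    ·
      simp [add_mul, mul_assoc, X_pow_mul, X_mul, coeff_mul_X_pow', coeff_mul_X,
        coeff_derivative, hlead, hz (m+3) (m+4) (by omega), hz (m+3) (m+5) (by omega)] at h
      rw [hL] at h
      push_cast at h ⊢
      linear_combination -h
  -- (14): leading coefficient of the derivative rule
  have hα : ∀ m : ℕ, α (m+1) * k (m+2) = a*((m:ℝ)+1)*(k (m+1)) := by
    intro m
    have h := congrArg (fun f => f.coeff (m+2)) (hrule (m+1) (by omega))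
    simp [add_mul, mul_assoc, X_pow_mul, X_mul, coeff_mul_X_pow', coeff_mul_X,
      coeff_derivative, hlead, hz (m+1) (m+2) (by omega), hz (m+1) (m+3) (by omega),
      hz m (m+2) (by omega)] at h
    norm_num [add_assoc] at h
    push_cast at h ⊢
    linear_combination -h
  intro n hn
  obtain ⟨m, rfl⟩ : ∃ m, n = m + 1 := ⟨n - 1, (Nat.succ_pred_eq_of_pos hn).symm⟩
  refine ⟨by push_cast; linear_combination hα m, ?_⟩
  -- (18): subleading coefficient of the derivative rule
  have h := congrArg (fun f => f.coeff (m+1)) (hrule (m+1) (by omega))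
  have E1 := hsrel m
  have E2 := hsrel (m+1)
  have E3 := hα m
  have hk := hk0 (m+1)
  match m, h, E1, E2, E3, hk with
  | 0, h, E1, E2, E3, hk =>
    simp [add_mul, mul_assoc, X_pow_mul, X_mul, coeff_mul_X_pow', coeff_mul_X,
      coeff_derivative, hlead, hz 1 2 (by omega), hz 1 3 (by omega),
      hz 0 1 (by omega)] at h
    push_cast at h E1 E2 E3 ⊢
    apply mul_right_cancel₀ hk
    linear_combination (2*a*0+d) * (2*a*1+d) * (-h) - α 1 * (2*a*0+d) * E2
      - (1+1)*(b*1+e)*(2*a*0+d) * E3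
  | (m+1), h, E1, E2, E3, hk =>
    simp [add_mul, mul_assoc, X_pow_mul, X_mul, coeff_mul_X_pow', coeff_mul_X,
      coeff_derivative, hlead, hz (m+2) (m+3) (by omega), hz (m+2) (m+4) (by omega),
      hz (m+1) (m+2) (by omega)] at h
    push_cast at h E1 E2 E3 ⊢
    apply mul_right_cancel₀ (hk0 (m+2))
    linear_combination (2*a*((m:ℝ)+1)+d) * (2*a*((m:ℝ)+2)+d) * (-h)
      + a*((m:ℝ)+1)*(2*a*((m:ℝ)+2)+d) * E1
      - α (m+2) * (2*a*((m:ℝ)+1)+d) * E2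
      - ((m:ℝ)+3)*(b*((m:ℝ)+2)+e)*(2*a*((m:ℝ)+1)+d) * E3
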